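/- Let q be a prime power, let m, n > 1 be relatively prime integers, let m₁ be the smallest prime divisor of m and n₁ the smallest prime divisor of n. Suppose there exists a polynomial φ(x,y) ∈ F_q[x,y] with deg_x φ = m₁ and 0 < deg_y φ < n₁ such that φ(σ^k(α), β) = φ(α, β) for some integer k, some α ∈ 𝓕_m(q) with σ^k(α) ≠ α, and some β ∈ 𝓕_n(q). Then there exists a polynomial ψ(x) ∈ F_q[x] with deg ψ = m₁ which fails to satisfy restricted injectivity on 𝓕_m(q), i.e., there exist α ∈ 𝓕_m(q) and an integer k with ψ(σ^k(α)) = ψ(α) and σ^k(α) ≠ α. -/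

import Mathlib

open Polynomial

/-- `Fcal q m` is the set `𝓕_m(q)` of elements generating `𝔽_{q^m}` over `𝔽_q`. -/
def Fcal (q m : ℕ) {K : Type*} [Monoid K] : Set K :=
  {α | α ^ q ^ m = α ∧ ∀ l : ℕ, 0 < l → α ^ q ^ l = α → m ∣ l}

lemma aux_sigma_pow {F : Type*} [Field F] (q : ℕ)
    (σ : AlgebraicClosure F ≃ₐ[F] AlgebraicClosure F) (hσ : ∀ x, σ x = x ^ q)
    (j : ℕ) : ∀ x : AlgebraicClosure F, (σ ^ j) x = x ^ q ^ j := by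
  induction j with
  | zero => simp
  | succ j ih =>
    intro x
    rw [pow_succ, AlgEquiv.mul_apply, hσ, ih, ← pow_mul]
    ring_nf

lemma aux_fix_zpow {F K : Type*} [Field F] [Field K] [Algebra F K]
    (f : K ≃ₐ[F] K) {x : K} (h : f x = x) (s : ℤ) : (f ^ s) x = x := by
  have hn : ∀ j : ℕ, (f ^ j) x = x := by
    intro j
    induction j with
    | zero => simp
    | succ j ih => rw [pow_succ, AlgEquiv.mul_apply, h, ih]
  cases s with
  | ofNat n => simpa using hn n
  | negSucc n =>
    rw [zpow_negSucc]
    apply (f ^ (n + 1)).injective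
    have : (f ^ (n + 1)) ((f ^ (n + 1))⁻¹ x) = x := by
      rw [← AlgEquiv.mul_apply, mul_inv_cancel, AlgEquiv.one_apply]
    rw [this, hn]

lemma aux_pow_card {F : Type*} [Field F] [Fintype F] {q : ℕ} (hq : Fintype.card F = q)
    (M : Type*) [Field M] [Algebra F M] [FiniteDimensional F M] (y : M) :
    y ^ q ^ Module.finrank F M = y := by
  haveI : Finite M := Module.finite_of_finite F
  haveI : Fintype M := Fintype.ofFinite M
  have hcard : Fintype.card M = q ^ Module.finrank F M := by
    rw [← hq]; exact Module.card_eq_pow_finrank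
  rw [← hcard, FiniteField.pow_card]

lemma aux_finrank {F : Type*} [Field F] [Fintype F] {q : ℕ} (hq : Fintype.card F = q)
    (σ : AlgebraicClosure F ≃ₐ[F] AlgebraicClosure F) (hσ : ∀ x, σ x = x ^ q)
    {r : ℕ} (hr : 0 < r) {γ : AlgebraicClosure F}
    (hγ : γ ∈ (Fcal q r : Set (AlgebraicClosure F))) :
    Module.finrank F (IntermediateField.adjoin F {γ}) = r := by
  have hq1 : 1 < q := hq ▸ Fintype.one_lt_card
  have hint : IsIntegral F γ := (Algebra.IsAlgebraic.isAlgebraic (R := F) γ).isIntegral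
  haveI : FiniteDimensional F (IntermediateField.adjoin F {γ} :
      IntermediateField F (AlgebraicClosure F)) :=
    IntermediateField.adjoin.finiteDimensional hint
  set E := (IntermediateField.adjoin F {γ} : IntermediateField F (AlgebraicClosure F)) with hE
  have hcpos : 0 < Module.finrank F E := Module.finrank_pos
  have hdvd : r ∣ Module.finrank F E := by
    refine hγ.2 _ hcpos ?_
    have h := aux_pow_card hq E (⟨γ, IntermediateField.mem_adjoin_simple_self F γ⟩ : E)
    have := congrArg (fun z : E => (z : AlgebraicClosure F)) h
    simpa using this
  -- every x ∈ E satisfies x ^ q ^ r = x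
  have hEfix : ∀ x ∈ E, x ^ q ^ r = x := by
    have hsub : E.toSubalgebra ≤ AlgHom.equalizer
        ((σ ^ r : AlgebraicClosure F ≃ₐ[F] AlgebraicClosure F) : AlgebraicClosure F →ₐ[F] AlgebraicClosure F)
        (AlgHom.id F (AlgebraicClosure F)) := by
      rw [hE, IntermediateField.adjoin_simple_toSubalgebra_of_isAlgebraic hint.isAlgebraic]
      apply Algebra.adjoin_le
      intro x hx
      rw [Set.mem_singleton_iff] at hx
      subst hx
      rw [SetLike.mem_coe, AlgHom.mem_equalizer]
      show (σ ^ r) x = x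
      rw [aux_sigma_pow q σ hσ r x]
      exact hγ.1
    intro x hx
    have h2 : (σ ^ r) x = x := (AlgHom.mem_equalizer _ _ x).mp (hsub hx)
    rw [← aux_sigma_pow q σ hσ r x]
    exact h2
  -- injection into roots of X^(q^r) - X
  haveI : Finite E := Module.finite_of_finite F
  haveI : Fintype E := Fintype.ofFinite E
  have hcard : Fintype.card E = q ^ Module.finrank F E := by
    rw [← hq]; exact Module.card_eq_pow_finrank
  have hN : 1 < q ^ r := one_lt_pow₀ hq1 hr.ne'
  set f : Polynomial (AlgebraicClosure F) := X ^ (q ^ r) - X with hf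
  classical
  have hmon : f.Monic := by
    apply Polynomial.monic_X_pow_sub
    rw [Polynomial.degree_X]
    exact_mod_cast hN
  have hf0 : f ≠ 0 := hmon.ne_zero
  have hle : Fintype.card E ≤ q ^ r := by
    have hroot : ∀ x : E, (x : AlgebraicClosure F) ∈ f.roots.toFinset := by
      intro x
      rw [Multiset.mem_toFinset, Polynomial.mem_roots hf0]
      simp [hf, Polynomial.IsRoot, sub_eq_zero, hEfix x.1 x.2]
    calc Fintype.card E ≤ (f.roots.toFinset).card := by
          rw [← Fintype.card_coe]
          apply Fintype.card_le_of_injective (fun x : E => (⟨(x : AlgebraicClosure F), hroot x⟩ : f.roots.toFinset))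
          intro a b hab
          exact Subtype.ext (by simpa using congrArg Subtype.val hab)
      _ ≤ Multiset.card f.roots := Multiset.toFinset_card_le _
      _ ≤ f.natDegree := Polynomial.card_roots' f
      _ ≤ q ^ r := by
          refine le_trans (Polynomial.natDegree_sub_le _ _) ?_
          simp only [Polynomial.natDegree_X_pow, Polynomial.natDegree_X]
          omega
  have hcr : Module.finrank F E ≤ r := by
    rw [hcard] at hle
    exact (Nat.pow_le_pow_iff_right hq1).mp hle
  exact le_antisymm hcr (Nat.le_of_dvd hcpos hdvd)

lemma aux_decomp {F : Type*} [Field F] {K : Type*} [CommRing K] [Algebra F K]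
    (φ : MvPolynomial (Fin 2) F) (D : ℕ) (hD : φ.degreeOf 1 ≤ D) (x y : K) :
    MvPolynomial.aeval ![x, y] φ =
      ∑ j ∈ Finset.range (D + 1),
        Polynomial.aeval x (∑ u ∈ φ.support.filter (fun u => u 1 = j),
          Polynomial.C (φ.coeff u) * Polynomial.X ^ (u 0)) * y ^ j := by
  classical
  have hmap : ∀ u ∈ φ.support, u 1 ∈ Finset.range (D + 1) := by
    intro u hu
    rw [Finset.mem_range]
    have : u 1 ≤ φ.degreeOf 1 := by
      rw [MvPolynomial.degreeOf_eq_sup]; exact Finset.le_sup (f := fun u : Fin 2 →₀ ℕ => u 1) hu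
    omega
  rw [MvPolynomial.aeval_def, MvPolynomial.eval₂_eq',
    ← Finset.sum_fiberwise_of_maps_to hmap]
  refine Finset.sum_congr rfl fun j hj => ?_
  rw [map_sum, Finset.sum_mul]
  refine Finset.sum_congr rfl fun u hu => ?_
  rw [Finset.mem_filter] at hu
  rw [Fin.prod_univ_two]
  simp only [Matrix.cons_val_zero, Matrix.cons_val_one, Matrix.head_cons, map_mul, map_pow,
    Polynomial.aeval_C, Polynomial.aeval_X, hu.2]
  ring

/-- (Proposition, (i) ⟹ (ii).)  If there is `φ(x,y) ∈ 𝔽_q[x,y]` with `deg_x φ = m₁`,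
`0 < deg_y φ < n₁`, such that `φ(σ^k(α), β) = φ(α, β)` for some `k ∈ ℤ`,
`α ∈ 𝓕_m(q)` with `σ^k(α) ≠ α`, and `β ∈ 𝓕_n(q)`, then there is `ψ(x) ∈ 𝔽_q[x]` with
`deg ψ = m₁` failing restricted injectivity on `𝓕_m(q)`. -/
theorem stmt_13 {F : Type*} [Field F] [Fintype F] (q : ℕ) (hq : Fintype.card F = q)
    (σ : AlgebraicClosure F ≃ₐ[F] AlgebraicClosure F) (hσ : ∀ x, σ x = x ^ q)
    (m n m₁ n₁ : ℕ) (hm : 1 < m) (hn : 1 < n) (hmn : Nat.Coprime m n)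
    (hm₁ : m₁ = m.minFac) (hn₁ : n₁ = n.minFac)
    (φ : MvPolynomial (Fin 2) F)
    (hx : φ.degreeOf 0 = m₁) (hy₀ : 0 < φ.degreeOf 1) (hy₁ : φ.degreeOf 1 < n₁)
    (k : ℤ) (α β : AlgebraicClosure F)
    (hα : α ∈ (Fcal q m : Set (AlgebraicClosure F)))
    (hβ : β ∈ (Fcal q n : Set (AlgebraicClosure F)))
    (hne : (σ ^ k) α ≠ α)
    (hφ : MvPolynomial.aeval ![(σ ^ k) α, β] φ = MvPolynomial.aeval ![α, β] φ) :
    ∃ ψ : Polynomial F, ψ.natDegree = m₁ ∧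
      ∃ α' ∈ (Fcal q m : Set (AlgebraicClosure F)), ∃ k' : ℤ,
        Polynomial.aeval ((σ ^ k') α') ψ = Polynomial.aeval α' ψ ∧ (σ ^ k') α' ≠ α' := by
  classical
  have hq1 : 1 < q := hq ▸ Fintype.one_lt_card
  have hmpos : 0 < m := by omega
  have hnpos : 0 < n := by omega
  -- Step A: (σ ^ k) α is a q-power of α
  have hfixm : (σ ^ (m : ℕ)) α = α := by
    rw [aux_sigma_pow q σ hσ m α]; exact hα.1
  set r : ℕ := (k % (m : ℤ)).toNat with hrdef
  have har : (σ ^ k) α = α ^ q ^ r := by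
    have h0 : k % (m : ℤ) + (m : ℤ) * (k / (m : ℤ)) = k := Int.emod_add_mul_ediv k m
    have h1 : (σ ^ k) α = (σ ^ (k % (m : ℤ))) ((σ ^ ((m : ℤ) * (k / (m : ℤ)))) α) := by
      rw [← AlgEquiv.mul_apply, ← zpow_add, h0]
    have h2 : (σ ^ ((m : ℤ) * (k / (m : ℤ)))) α = α := by
      rw [zpow_mul, zpow_natCast]
      exact aux_fix_zpow (σ ^ (m : ℕ)) hfixm (k / (m : ℤ))
    have h3 : ((r : ℤ)) = k % (m : ℤ) :=
      Int.toNat_of_nonneg (Int.emod_nonneg k (by exact_mod_cast hmpos.ne'))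
    rw [h1, h2, ← h3, zpow_natCast, aux_sigma_pow q σ hσ r α]
  set a' := (σ ^ k) α with ha'def
  -- Step B: the field E = F(α)
  have hαint : IsIntegral F α := (Algebra.IsAlgebraic.isAlgebraic (R := F) α).isIntegral
  have hβint : IsIntegral F β := (Algebra.IsAlgebraic.isAlgebraic (R := F) β).isIntegral
  set E := (IntermediateField.adjoin F {α} :
    IntermediateField F (AlgebraicClosure F)) with hEdef
  haveI : FiniteDimensional F E := IntermediateField.adjoin.finiteDimensional hαint
  have hαmem : α ∈ E := IntermediateField.mem_adjoin_simple_self F α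
  have ha'mem : a' ∈ E := by rw [har]; exact pow_mem hαmem _
  have hrankE : Module.finrank F E = m := aux_finrank hq σ hσ hmpos hα
  -- Step G: minpoly of β over E has degree ≥ n
  have hβintE : IsIntegral E β := hβint.tower_top
  have htn : n ≤ (minpoly E β).natDegree := by
    set t := (minpoly E β).natDegree with htdef
    have htpos : 0 < t := minpoly.natDegree_pos hβintE
    set M := (IntermediateField.adjoin E {β} :
      IntermediateField E (AlgebraicClosure F)) with hMdef
    haveI : FiniteDimensional E M := IntermediateField.adjoin.finiteDimensional hβintE
    haveI : FiniteDimensional F M := FiniteDimensional.trans F E M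
    have hrankM : Module.finrank E M = t := IntermediateField.adjoin.finrank hβintE
    have hfM : Module.finrank F M = m * t := by
      rw [← Module.finrank_mul_finrank F E M, hrankE, hrankM]
    have hβM : β ^ q ^ Module.finrank F M = β := by
      have h := aux_pow_card hq M (⟨β, IntermediateField.mem_adjoin_simple_self E β⟩ : M)
      have := congrArg (fun z : M => (z : AlgebraicClosure F)) h
      simpa using this
    have hdvd : n ∣ m * t := by
      rw [← hfM]
      exact hβ.2 _ Module.finrank_pos hβM
    exact Nat.le_of_dvd htpos (Nat.Coprime.dvd_of_dvd_mul_left hmn.symm hdvd)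
  have hφ0 : φ ≠ 0 := by
    intro h; rw [h] at hy₀; simp at hy₀
  -- coefficient polynomials
  set D := φ.degreeOf 1 with hDdef
  set c : ℕ → Polynomial F := fun j =>
    ∑ u ∈ φ.support.filter (fun u => u 1 = j),
      Polynomial.C (φ.coeff u) * Polynomial.X ^ (u 0) with hcdef
  -- Step D
  have hsum : ∑ j ∈ Finset.range (D + 1),
      (Polynomial.aeval a' (c j) - Polynomial.aeval α (c j)) * β ^ j = 0 := by
    have h1 := aux_decomp φ D le_rfl a' β
    have h2 := aux_decomp φ D le_rfl α β
    rw [h1, h2] at hφ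
    calc ∑ j ∈ Finset.range (D + 1),
          (Polynomial.aeval a' (c j) - Polynomial.aeval α (c j)) * β ^ j
        = ∑ j ∈ Finset.range (D + 1),
            (Polynomial.aeval a' (c j) * β ^ j - Polynomial.aeval α (c j) * β ^ j) := by
          refine Finset.sum_congr rfl fun j _ => ?_; ring
      _ = 0 := by rw [Finset.sum_sub_distrib, hφ, sub_self]
  -- Step E/F
  set e : ℕ → E := fun j =>
    Polynomial.aeval (⟨a', ha'mem⟩ : E) (c j) - Polynomial.aeval (⟨α, hαmem⟩ : E) (c j)
    with hedef
  have hecoe : ∀ j, (algebraMap E (AlgebraicClosure F)) (e j)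
      = Polynomial.aeval a' (c j) - Polynomial.aeval α (c j) := by
    intro j
    rw [hedef, RingHom.map_sub, ← Polynomial.aeval_algebraMap_apply, ← Polynomial.aeval_algebraMap_apply]
    rfl
  set P : Polynomial E := ∑ j ∈ Finset.range (D + 1), Polynomial.C (e j) * Polynomial.X ^ j
    with hPdef
  have haPβ : Polynomial.aeval β P = 0 := by
    rw [hPdef, map_sum]
    calc ∑ j ∈ Finset.range (D + 1), Polynomial.aeval β (Polynomial.C (e j) * Polynomial.X ^ j)
        = ∑ j ∈ Finset.range (D + 1),
            (Polynomial.aeval a' (c j) - Polynomial.aeval α (c j)) * β ^ j := by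
          refine Finset.sum_congr rfl fun j _ => ?_
          rw [map_mul, map_pow, Polynomial.aeval_X, Polynomial.aeval_C, hecoe j]
      _ = 0 := hsum
  have hn₁n : n₁ ≤ n := hn₁ ▸ Nat.minFac_le hnpos
  have hP0 : P = 0 := by
    by_contra hP
    have hdvd := minpoly.dvd E β haPβ
    have h1 : (minpoly E β).natDegree ≤ P.natDegree := natDegree_le_of_dvd hdvd hP
    have h2 : P.natDegree ≤ D := by
      refine Polynomial.natDegree_sum_le_of_forall_le _ _ fun j hj => ?_
      refine le_trans (Polynomial.natDegree_C_mul_X_pow_le _ _) ?_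
      exact Nat.lt_succ_iff.mp (Finset.mem_range.mp hj)
    omega
  have he0 : ∀ j ∈ Finset.range (D + 1), e j = 0 := by
    intro j hj
    have hco : P.coeff j = e j := by
      rw [hPdef, Polynomial.finset_sum_coeff]
      rw [Finset.sum_congr rfl fun i _ => by
        rw [Polynomial.coeff_C_mul, Polynomial.coeff_X_pow]]
      simp [Finset.mem_range.mp hj]
    rw [hP0] at hco
    simpa using hco.symm
  -- Step H: pick the right coefficient polynomial
  obtain ⟨u, hu, hum⟩ := Finset.exists_mem_eq_sup φ.support
    (MvPolynomial.support_nonempty.mpr hφ0) (fun v : Fin 2 →₀ ℕ => v 0)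
  have hum' : u 0 = m₁ := by rw [← hx, MvPolynomial.degreeOf_eq_sup, hum]
  set j₀ := u 1 with hj₀def
  have hj₀ : j₀ ∈ Finset.range (D + 1) := by
    rw [Finset.mem_range, Nat.lt_succ_iff, hDdef, MvPolynomial.degreeOf_eq_sup]
    exact Finset.le_sup (f := fun v : Fin 2 →₀ ℕ => v 1) hu
  -- degree of c j₀
  have hdegle : (c j₀).natDegree ≤ m₁ := by
    refine Polynomial.natDegree_sum_le_of_forall_le _ _ fun v hv => ?_
    refine le_trans (Polynomial.natDegree_C_mul_X_pow_le _ _) ?_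
    rw [← hx, MvPolynomial.degreeOf_eq_sup]
    exact Finset.le_sup (f := fun v : Fin 2 →₀ ℕ => v 0) (Finset.mem_filter.mp hv).1
  have hcoeff : (c j₀).coeff m₁ = φ.coeff u := by
    have hstep : (c j₀).coeff m₁ =
        ∑ v ∈ φ.support.filter (fun v => v 1 = j₀), (if v 0 = m₁ then φ.coeff v else 0) := by
      rw [hcdef, Polynomial.finset_sum_coeff]
      refine Finset.sum_congr rfl fun v _ => ?_
      rw [Polynomial.coeff_C_mul, Polynomial.coeff_X_pow]
      by_cases h : v 0 = m₁
      · rw [if_pos h, if_pos h.symm, mul_one]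
      · rw [if_neg h, if_neg (fun hh => h hh.symm), mul_zero]
    rw [hstep, Finset.sum_eq_single_of_mem u (Finset.mem_filter.mpr ⟨hu, (rfl : u 1 = j₀)⟩)]
    · rw [if_pos hum']
    · intro v hv hvne
      rw [Finset.mem_filter] at hv
      rw [if_neg]
      intro h00
      apply hvne
      apply Finsupp.ext
      intro i
      fin_cases i
      · show v 0 = u 0
        rw [h00, hum']
      · show v 1 = u 1
        exact hv.2
  have hcne : (c j₀).coeff m₁ ≠ 0 := by
    rw [hcoeff]; exact MvPolynomial.mem_support_iff.mp hu
  have hdeg : (c j₀).natDegree = m₁ :=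
    le_antisymm hdegle (Polynomial.le_natDegree_of_ne_zero hcne)
  -- the key equality
  have heq : Polynomial.aeval a' (c j₀) = Polynomial.aeval α (c j₀) := by
    have h := hecoe j₀
    rw [he0 j₀ hj₀, map_zero] at h
    exact (sub_eq_zero.mp h.symm)
  exact ⟨c j₀, hdeg, α, hα, k, heq, hne⟩
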